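/- The mixed polynomial f(z₁, z₂, z̄₁, z̄₂) = z̄₂⁴ + z₁z₂² + z₁²z̄₁ is strongly non-degenerate: each of the five face functions f_A = z̄₂⁴, f_B = z₁z₂², f_C = z₁²z̄₁, f_{AB} = z̄₂⁴ + z₁z₂², f_{BC} = z₁z₂² + z₁²z̄₁ (corresponding to the vertices A=(0,4), B=(1,2), C=(3,0) and the two segments of the Newton boundary) has no critical point on (ℂ*)², i.e., there is no point (z₁, z₂) with z₁z₂ ≠ 0 and no λ with |λ|=1 such that conj(∂f_Δ) = λ ∂̄f_Δ at that point. -/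

import Mathlib

open Complex ComplexConjugate

/-- Wirtinger derivative `∂k/∂z₁` of a mixed function of two variables. -/
noncomputable def w1 (k : ℂ × ℂ → ℂ) (p : ℂ × ℂ) : ℂ :=
  (1 / 2 : ℂ) * (fderiv ℝ k p (1, 0) - Complex.I * fderiv ℝ k p (Complex.I, 0))

/-- Wirtinger derivative `∂k/∂z̄₁`. -/
noncomputable def w1bar (k : ℂ × ℂ → ℂ) (p : ℂ × ℂ) : ℂ :=
  (1 / 2 : ℂ) * (fderiv ℝ k p (1, 0) + Complex.I * fderiv ℝ k p (Complex.I, 0))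

/-- Wirtinger derivative `∂k/∂z₂`. -/
noncomputable def w2 (k : ℂ × ℂ → ℂ) (p : ℂ × ℂ) : ℂ :=
  (1 / 2 : ℂ) * (fderiv ℝ k p (0, 1) - Complex.I * fderiv ℝ k p (0, Complex.I))

/-- Wirtinger derivative `∂k/∂z̄₂`. -/
noncomputable def w2bar (k : ℂ × ℂ → ℂ) (p : ℂ × ℂ) : ℂ :=
  (1 / 2 : ℂ) * (fderiv ℝ k p (0, 1) + Complex.I * fderiv ℝ k p (0, Complex.I))

/-- Mixed critical point: `conj ∂k(p) = λ ∂̄k(p)` for some `λ` with `|λ| = 1`. -/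
def IsMixedCrit (k : ℂ × ℂ → ℂ) (p : ℂ × ℂ) : Prop :=
  ∃ lam : ℂ, ‖lam‖ = 1 ∧
    conj (w1 k p) = lam * w1bar k p ∧ conj (w2 k p) = lam * w2bar k p

noncomputable def conjL : ℂ →L[ℝ] ℂ := Complex.conjCLE.toContinuousLinearMap

@[simp] lemma conjL_apply (z : ℂ) : conjL z = conj z := rfl

open ContinuousLinearMap in
lemma hz1 (p : ℂ × ℂ) : HasFDerivAt (fun q : ℂ × ℂ => q.1) (fst ℝ ℂ ℂ) p := hasFDerivAt_fst
open ContinuousLinearMap in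
lemma hz2 (p : ℂ × ℂ) : HasFDerivAt (fun q : ℂ × ℂ => q.2) (snd ℝ ℂ ℂ) p := hasFDerivAt_snd
open ContinuousLinearMap in
lemma hc1 (p : ℂ × ℂ) : HasFDerivAt (fun q : ℂ × ℂ => conj q.1) (conjL ∘L fst ℝ ℂ ℂ) p :=
  conjL.hasFDerivAt.comp p hasFDerivAt_fst
open ContinuousLinearMap in
lemma hc2 (p : ℂ × ℂ) : HasFDerivAt (fun q : ℂ × ℂ => conj q.2) (conjL ∘L snd ℝ ℂ ℂ) p :=
  conjL.hasFDerivAt.comp p hasFDerivAt_snd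

-- face A : z̄₂⁴
lemma funA : (fun q : ℂ × ℂ => conj q.2 ^ 4)
    = fun q : ℂ × ℂ => conj q.2 * (conj q.2 * (conj q.2 * conj q.2)) := by
  funext q; ring

noncomputable def hA (p : ℂ × ℂ) := (hc2 p).fun_mul ((hc2 p).fun_mul ((hc2 p).fun_mul (hc2 p)))

lemma wA1 (p : ℂ × ℂ) : w1 (fun q => conj q.2 ^ 4) p = 0 := by
  rw [funA, w1, (hA p).fderiv]; simp [smul_eq_mul]

lemma wA2 (p : ℂ × ℂ) : w2 (fun q => conj q.2 ^ 4) p = 0 := by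
  rw [funA, w2, (hA p).fderiv]; simp [smul_eq_mul]; ring_nf; rw [Complex.I_sq]; ring

lemma wA2bar (p : ℂ × ℂ) : w2bar (fun q => conj q.2 ^ 4) p = 4 * conj p.2 ^ 3 := by
  rw [funA, w2bar, (hA p).fderiv]; simp [smul_eq_mul]; ring_nf; rw [Complex.I_sq]; ring

-- face B : z₁ z₂²
lemma funB : (fun q : ℂ × ℂ => q.1 * q.2 ^ 2) = fun q : ℂ × ℂ => q.1 * (q.2 * q.2) := by
  funext q; ring

noncomputable def hB (p : ℂ × ℂ) := (hz1 p).fun_mul ((hz2 p).fun_mul (hz2 p))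

lemma wB1 (p : ℂ × ℂ) : w1 (fun q => q.1 * q.2 ^ 2) p = p.2 ^ 2 := by
  rw [funB, w1, (hB p).fderiv]; simp [smul_eq_mul]; ring_nf; rw [Complex.I_sq]; ring

lemma wB1bar (p : ℂ × ℂ) : w1bar (fun q => q.1 * q.2 ^ 2) p = 0 := by
  rw [funB, w1bar, (hB p).fderiv]; simp [smul_eq_mul]; ring_nf; rw [Complex.I_sq]; ring

lemma wB2 (p : ℂ × ℂ) : w2 (fun q => q.1 * q.2 ^ 2) p = 2 * p.1 * p.2 := by
  rw [funB, w2, (hB p).fderiv]; simp [smul_eq_mul]; ring_nf; rw [Complex.I_sq]; ring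

lemma wB2bar (p : ℂ × ℂ) : w2bar (fun q => q.1 * q.2 ^ 2) p = 0 := by
  rw [funB, w2bar, (hB p).fderiv]; simp [smul_eq_mul]; ring_nf; rw [Complex.I_sq]; ring

-- face C : z₁² z̄₁
lemma funC : (fun q : ℂ × ℂ => q.1 ^ 2 * conj q.1) = fun q : ℂ × ℂ => q.1 * (q.1 * conj q.1) := by
  funext q; ring

noncomputable def hC (p : ℂ × ℂ) := (hz1 p).fun_mul ((hz1 p).fun_mul (hc1 p))

lemma wC1 (p : ℂ × ℂ) : w1 (fun q => q.1 ^ 2 * conj q.1) p = 2 * p.1 * conj p.1 := by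
  rw [funC, w1, (hC p).fderiv]; simp [smul_eq_mul]; ring_nf; rw [Complex.I_sq]; ring

lemma wC1bar (p : ℂ × ℂ) : w1bar (fun q => q.1 ^ 2 * conj q.1) p = p.1 ^ 2 := by
  rw [funC, w1bar, (hC p).fderiv]; simp [smul_eq_mul]; ring_nf; rw [Complex.I_sq]; ring

lemma wC2 (p : ℂ × ℂ) : w2 (fun q => q.1 ^ 2 * conj q.1) p = 0 := by
  rw [funC, w2, (hC p).fderiv]; simp [smul_eq_mul]

lemma wC2bar (p : ℂ × ℂ) : w2bar (fun q => q.1 ^ 2 * conj q.1) p = 0 := by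
  rw [funC, w2bar, (hC p).fderiv]; simp [smul_eq_mul]

-- face AB : z̄₂⁴ + z₁ z₂²
lemma funAB : (fun q : ℂ × ℂ => conj q.2 ^ 4 + q.1 * q.2 ^ 2)
    = fun q : ℂ × ℂ => conj q.2 * (conj q.2 * (conj q.2 * conj q.2)) + q.1 * (q.2 * q.2) := by
  funext q; ring

noncomputable def hAB (p : ℂ × ℂ) := (hA p).fun_add (hB p)

lemma wAB1 (p : ℂ × ℂ) : w1 (fun q => conj q.2 ^ 4 + q.1 * q.2 ^ 2) p = p.2 ^ 2 := by
  rw [funAB, w1, (hAB p).fderiv]; simp [smul_eq_mul]; ring_nf; rw [Complex.I_sq]; ring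

lemma wAB1bar (p : ℂ × ℂ) : w1bar (fun q => conj q.2 ^ 4 + q.1 * q.2 ^ 2) p = 0 := by
  rw [funAB, w1bar, (hAB p).fderiv]; simp [smul_eq_mul]; ring_nf; rw [Complex.I_sq]; ring

-- face BC : z₁ z₂² + z₁² z̄₁
lemma funBC : (fun q : ℂ × ℂ => q.1 * q.2 ^ 2 + q.1 ^ 2 * conj q.1)
    = fun q : ℂ × ℂ => q.1 * (q.2 * q.2) + q.1 * (q.1 * conj q.1) := by
  funext q; ring

noncomputable def hBC (p : ℂ × ℂ) := (hB p).fun_add (hC p)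

lemma wBC2 (p : ℂ × ℂ) : w2 (fun q => q.1 * q.2 ^ 2 + q.1 ^ 2 * conj q.1) p = 2 * p.1 * p.2 := by
  rw [funBC, w2, (hBC p).fderiv]; simp [smul_eq_mul]; ring_nf; rw [Complex.I_sq]; ring

lemma wBC2bar (p : ℂ × ℂ) : w2bar (fun q => q.1 * q.2 ^ 2 + q.1 ^ 2 * conj q.1) p = 0 := by
  rw [funBC, w2bar, (hBC p).fderiv]; simp [smul_eq_mul]; ring_nf; rw [Complex.I_sq]; ring

/-- the mixed polynomial `f = z̄₂⁴ + z₁z₂² + z₁²z̄₁` is strongly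
non-degenerate: each of its five face functions has no mixed critical point on
`(ℂ*)²`. -/
theorem example2_strongly_nondegenerate (p : ℂ × ℂ) (h1 : p.1 ≠ 0) (h2 : p.2 ≠ 0) :
    ¬ IsMixedCrit (fun q => conj q.2 ^ 4) p ∧
    ¬ IsMixedCrit (fun q => q.1 * q.2 ^ 2) p ∧
    ¬ IsMixedCrit (fun q => q.1 ^ 2 * conj q.1) p ∧
    ¬ IsMixedCrit (fun q => conj q.2 ^ 4 + q.1 * q.2 ^ 2) p ∧
    ¬ IsMixedCrit (fun q => q.1 * q.2 ^ 2 + q.1 ^ 2 * conj q.1) p := by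
  refine ⟨?_, ?_, ?_, ?_, ?_⟩
  · rintro ⟨lam, hl, hcA1, hcA2⟩
    rw [wA2, wA2bar] at hcA2
    have hlam : lam ≠ 0 := by intro h; rw [h] at hl; simp at hl
    have : lam * (4 * conj p.2 ^ 3) = 0 := by rw [← hcA2]; simp
    rcases mul_eq_zero.mp this with h | h
    · exact hlam h
    · have : conj p.2 = 0 := by
        rcases mul_eq_zero.mp h with h' | h'
        · norm_num at h'
        · exact pow_eq_zero_iff (by norm_num) |>.mp h'
      exact h2 (by simpa using congrArg conj this)
  · rintro ⟨lam, hl, hcB1, hcB2⟩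
    rw [wB1, wB1bar] at hcB1
    have : conj (p.2 ^ 2) = 0 := by rw [hcB1]; ring
    have : p.2 = 0 := by
      have := congrArg conj this
      simpa using this
    exact h2 this
  · rintro ⟨lam, hl, hcC1, hcC2⟩
    rw [wC1, wC1bar] at hcC1
    have hn := congrArg (‖·‖) hcC1
    simp only [norm_mul, hl, one_mul, RCLike.norm_conj, norm_pow] at hn
    have h2' : ‖(2:ℂ)‖ = 2 := by simp
    rw [h2'] at hn
    nlinarith [(norm_pos_iff.mpr h1 : (0:ℝ) < ‖p.1‖)]
  · rintro ⟨lam, hl, hcAB1, hcAB2⟩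
    rw [wAB1, wAB1bar] at hcAB1
    have : conj (p.2 ^ 2) = 0 := by rw [hcAB1]; ring
    have : p.2 = 0 := by
      have := congrArg conj this
      simpa using this
    exact h2 this
  · rintro ⟨lam, hl, hcBC1, hcBC2⟩
    rw [wBC2, wBC2bar] at hcBC2
    have : conj (2 * p.1 * p.2) = 0 := by rw [hcBC2]; ring
    have := congrArg conj this
    simp at this
    rcases this with h | h
    · exact h1 h
    · exact h2 h
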